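/- Let L be a ℤ-graded Lie algebra over ℝ whose grading is concentrated in degrees [−1, N], equipped with an Euler element ε ∈ L_0, i.e. ⁅ε, x⁆ = p • x for every p ∈ ℤ and every x ∈ L_p. Let ψ : L → L be a Lie algebra automorphism such that ψ(x) − x ∈ ⊕_{q ≥ p+2} L_q for every p and every x ∈ L_p, and let Y denote the component in L_2 of ψ(ε). Then for every p and every x ∈ L_p, the component in L_{p+2} of ψ(x) equals −(1/2) • ⁅Y, x⁆. -/

import Mathlib

section Aux

variable {L : Type*} [LieRing L] [LieAlgebra ℝ L]
    (𝓛 : ℤ → Submodule ℝ L) [DirectSum.Decomposition 𝓛]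

/-- Induction principle for membership in `⨆ q ∈ {q | m ≤ q}, 𝓛 q`. -/
private lemma aux_sup_induction {m : ℤ} {z : L}
    (hz : z ∈ ⨆ q ∈ {q : ℤ | m ≤ q}, 𝓛 q) (C : L → Prop)
    (h0 : C 0) (hadd : ∀ a b, C a → C b → C (a + b))
    (hmem : ∀ q, m ≤ q → ∀ a ∈ 𝓛 q, C a) : C z := by
  refine Submodule.iSup_induction (motive := C) (x := z)
    (fun q : ℤ => ⨆ _ : q ∈ {q : ℤ | m ≤ q}, 𝓛 q) hz (fun q a ha => ?_) h0 hadd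
  by_cases hq : q ∈ {q : ℤ | m ≤ q}
  · rw [iSup_pos hq] at ha
    exact hmem q hq a ha
  · rw [iSup_neg hq] at ha
    simpa [(Submodule.mem_bot ℝ).mp ha] using h0

/-- Component of `⁅ε, v⁆` in degree `r` is `r • (component of v)`, for an Euler element. -/
private lemma aux_euler_comp (ε : L)
    (hε : ∀ p : ℤ, ∀ x ∈ 𝓛 p, ⁅ε, x⁆ = p • x) (r : ℤ) :
    ∀ v : L, (DirectSum.decompose 𝓛 ⁅ε, v⁆ r : L) =
      r • (DirectSum.decompose 𝓛 v r : L) := by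
  refine DirectSum.Decomposition.inductionOn 𝓛 ?_ ?_ ?_
  · simp
  · rintro q ⟨v, hv⟩
    show (DirectSum.decompose 𝓛 ⁅ε, v⁆ r : L) = r • (DirectSum.decompose 𝓛 v r : L)
    by_cases hqr : q = r
    · subst hqr
      rw [hε q v hv, DirectSum.decompose_of_mem_same 𝓛 (zsmul_mem hv q),
        DirectSum.decompose_of_mem_same 𝓛 hv]
    · rw [hε q v hv, DirectSum.decompose_of_mem_ne 𝓛 (zsmul_mem hv q) hqr,
        DirectSum.decompose_of_mem_ne 𝓛 hv hqr, smul_zero]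
  · intro a b ha hb
    rw [lie_add, DirectSum.decompose_add, DirectSum.add_apply, Submodule.coe_add, ha, hb,
      DirectSum.decompose_add, DirectSum.add_apply, Submodule.coe_add, smul_add]

/-- Component of `⁅u, x⁆` in degree `p + 2` for `x ∈ 𝓛 p` only sees the degree-2 part of `u`. -/
private lemma aux_bracket_comp
    (hbr : ∀ p q : ℤ, ∀ x ∈ 𝓛 p, ∀ y ∈ 𝓛 q, ⁅x, y⁆ ∈ 𝓛 (p + q))
    {p : ℤ} {x : L} (hx : x ∈ 𝓛 p) :
    ∀ u : L, (DirectSum.decompose 𝓛 ⁅u, x⁆ (p + 2) : L) =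
      ⁅(DirectSum.decompose 𝓛 u 2 : L), x⁆ := by
  refine DirectSum.Decomposition.inductionOn 𝓛 ?_ ?_ ?_
  · simp
  · rintro q ⟨u, hu⟩
    show (DirectSum.decompose 𝓛 ⁅u, x⁆ (p + 2) : L) = ⁅(DirectSum.decompose 𝓛 u 2 : L), x⁆
    have hmem : ⁅u, x⁆ ∈ 𝓛 (q + p) := hbr q p u hu x hx
    by_cases hq2 : q = 2
    · subst hq2
      rw [DirectSum.decompose_of_mem_same 𝓛 hu,
        DirectSum.decompose_of_mem_same 𝓛 (show ⁅u, x⁆ ∈ 𝓛 (p + 2) by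
          simpa [add_comm] using hmem)]
    · rw [DirectSum.decompose_of_mem_ne 𝓛 hu hq2,
        DirectSum.decompose_of_mem_ne 𝓛 hmem (by omega), zero_lie]
  · intro a b ha hb
    rw [add_lie, DirectSum.decompose_add, DirectSum.add_apply, Submodule.coe_add, ha, hb,
      DirectSum.decompose_add, DirectSum.add_apply, Submodule.coe_add, add_lie]

end Aux

/-- Let `L` be a `ℤ`-graded real Lie algebra (internal direct sum of
submodules `𝓛 p` with `⁅𝓛 p, 𝓛 q⁆ ⊆ 𝓛 (p + q)`), concentrated in degrees `[-1, N]`, with an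
Euler element `ε ∈ 𝓛 0` (i.e. `⁅ε, x⁆ = p • x` for `x ∈ 𝓛 p`).  Let `ψ` be a Lie algebra
automorphism of `L` with `ψ x - x ∈ ⨆ (q ≥ p + 2), 𝓛 q` for all `x ∈ 𝓛 p`, and let `Y` be the
component in `𝓛 2` of `ψ ε`.  Then for every `p` and every `x ∈ 𝓛 p`, the component in
`𝓛 (p + 2)` of `ψ x` equals `-(1/2) • ⁅Y, x⁆`. -/
theorem second_component_of_filtered_automorphism
    {L : Type*} [LieRing L] [LieAlgebra ℝ L]
    (𝓛 : ℤ → Submodule ℝ L) [DirectSum.Decomposition 𝓛]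
    (hbr : ∀ p q : ℤ, ∀ x ∈ 𝓛 p, ∀ y ∈ 𝓛 q, ⁅x, y⁆ ∈ 𝓛 (p + q))
    (N : ℕ) (hsupp : ∀ p : ℤ, (p < -1 ∨ (N : ℤ) < p) → 𝓛 p = ⊥)
    (ε : L) (hε0 : ε ∈ 𝓛 0) (hε : ∀ p : ℤ, ∀ x ∈ 𝓛 p, ⁅ε, x⁆ = p • x)
    (ψ : L ≃ₗ⁅ℝ⁆ L)
    (hψ : ∀ p : ℤ, ∀ x ∈ 𝓛 p, ψ x - x ∈ ⨆ q ∈ {q : ℤ | p + 2 ≤ q}, 𝓛 q) :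
    ∀ p : ℤ, ∀ x ∈ 𝓛 p,
      (DirectSum.decompose 𝓛 (ψ x) (p + 2) : L) =
        -(1 / 2 : ℝ) • ⁅(DirectSum.decompose 𝓛 (ψ ε) 2 : L), x⁆ := by
  intro p x hx
  set Y : L := (DirectSum.decompose 𝓛 (ψ ε) 2 : L) with hY
  set f2 : L := (DirectSum.decompose 𝓛 (ψ x) (p + 2) : L) with hf2
  set u : L := ψ ε - ε with hu
  set v : L := ψ x - x with hv
  have hu_mem : u ∈ ⨆ q ∈ {q : ℤ | 2 ≤ q}, 𝓛 q := by
    simpa using hψ 0 ε hε0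
  have hv_mem : v ∈ ⨆ q ∈ {q : ℤ | p + 2 ≤ q}, 𝓛 q := hψ p x hx
  -- degree-2 component of u is Y
  have hu2 : (DirectSum.decompose 𝓛 u 2 : L) = Y := by
    rw [hu, DirectSum.decompose_sub, DirectSum.sub_apply, Submodule.coe_sub,
      DirectSum.decompose_of_mem_ne 𝓛 hε0 (by norm_num), sub_zero]
  -- key identity
  have hlie : ψ ⁅ε, x⁆ = ⁅ψ ε, ψ x⁆ := LieEquiv.map_lie ψ ε x
  -- LHS: ψ (p • x) has (p+2)-component p • f2
  have hψsmul : ψ (p • x) = p • ψ x := by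
    have h := map_smul ψ.toLinearEquiv (p : ℝ) x
    rw [← Int.cast_smul_eq_zsmul ℝ, ← Int.cast_smul_eq_zsmul ℝ]
    exact h
  have hL : (DirectSum.decompose 𝓛 (ψ ⁅ε, x⁆) (p + 2) : L) = p • f2 := by
    rw [hε p x hx, hψsmul, ← Int.cast_smul_eq_zsmul ℝ, DirectSum.decompose_smul]
    rw [hf2, ← Int.cast_smul_eq_zsmul ℝ]
    rfl
  -- mixed term vanishes
  have hzero : (DirectSum.decompose 𝓛 ⁅u, v⁆ (p + 2) : L) = 0 := by
    refine aux_sup_induction 𝓛 hu_mem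
      (fun a => (DirectSum.decompose 𝓛 ⁅a, v⁆ (p + 2) : L) = 0) (by simp) ?_ ?_
    · intro a b ha hb
      rw [add_lie, DirectSum.decompose_add, DirectSum.add_apply, Submodule.coe_add, ha, hb,
        add_zero]
    · intro q hq a ha
      refine aux_sup_induction 𝓛 hv_mem
        (fun b => (DirectSum.decompose 𝓛 ⁅a, b⁆ (p + 2) : L) = 0) (by simp) ?_ ?_
      · intro c d hc hd
        rw [lie_add, DirectSum.decompose_add, DirectSum.add_apply, Submodule.coe_add, hc, hd,
          add_zero]
      · intro q' hq' b hb
        exact DirectSum.decompose_of_mem_ne 𝓛 (hbr q q' a ha b hb) (by omega)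
  -- RHS computation
  have hR : (DirectSum.decompose 𝓛 ⁅ψ ε, ψ x⁆ (p + 2) : L) = (p + 2) • f2 + ⁅Y, x⁆ := by
    have hsplit : ⁅ψ ε, ψ x⁆ = ⁅ε, ψ x⁆ + ⁅u, x⁆ + ⁅u, v⁆ := by
      rw [hu, hv]
      simp only [sub_lie, lie_sub]
      abel
    rw [hsplit, DirectSum.decompose_add, DirectSum.add_apply, Submodule.coe_add,
      DirectSum.decompose_add, DirectSum.add_apply, Submodule.coe_add,
      hzero, add_zero, aux_euler_comp 𝓛 ε hε (p + 2) (ψ x),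
      aux_bracket_comp 𝓛 hbr hx u, hu2, hf2]
  -- combine
  have hmain : p • f2 = (p + 2) • f2 + ⁅Y, x⁆ := by
    rw [← hL, hlie, hR]
  have hYx : ⁅Y, x⁆ = (-2 : ℤ) • f2 := by
    have h' : ⁅Y, x⁆ = p • f2 - (p + 2) • f2 := by rw [hmain]; abel
    rw [h', add_zsmul]
    abel
  rw [hYx, ← Int.cast_smul_eq_zsmul ℝ, smul_smul]
  norm_num
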